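/- Let n be a natural number with n ≥ 1, and let a, v be real numbers with v > 0 and |vⁿ − a| < vⁿ. Then a^{1/n} = ∑_{k=0}^∞ (−1)ᵏ · C(1/n, k) · v^{1−nk} · (vⁿ − a)ᵏ; equivalently, a^{1/n} = v − (vⁿ−a)/(n v^{n−1}) − (n−1)(vⁿ−a)²/(2n² v^{2n−1}) − (n−1)(2n−1)(vⁿ−a)³/(6n³ v^{3n−1}) − ⋯. -/

import Mathlib

/-- Generalized binomial coefficient `C(r, k) = (∏_{j=0}^{k-1} (r - j)) / k!`. -/
noncomputable def genBinom (r : ℝ) (k : ℕ) : ℝ :=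
  (∏ j ∈ Finset.range k, (r - j)) / (Nat.factorial k : ℝ)


lemma genBinom_zero (r : ℝ) : genBinom r 0 = 1 := by simp [genBinom]

lemma genBinom_succ (r : ℝ) (k : ℕ) :
    genBinom r (k + 1) * (k + 1) = genBinom r k * (r - k) := by
  have hk : (Nat.factorial k : ℝ) ≠ 0 := Nat.cast_ne_zero.2 (Nat.factorial_ne_zero k)
  have hk1 : ((k : ℝ) + 1) ≠ 0 := by positivity
  simp only [genBinom, Finset.prod_range_succ, Nat.factorial_succ, Nat.cast_mul, Nat.cast_add,
    Nat.cast_one]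
  field_simp

lemma genBinom_ne_zero {r : ℝ} (hr0 : 0 < r) (hr1 : r < 1) (k : ℕ) : genBinom r k ≠ 0 := by
  induction k with
  | zero => simp [genBinom]
  | succ k ih =>
      have h1 : r - (k : ℝ) ≠ 0 := by
        rcases Nat.eq_zero_or_pos k with h | h
        · subst h; simpa using hr0.ne'
        · have : (1 : ℝ) ≤ k := by exact_mod_cast h
          intro hc; nlinarith
      have hk1 : ((k : ℝ) + 1) ≠ 0 := by positivity
      have := genBinom_succ r k
      intro hc
      rw [hc, zero_mul] at this
      exact mul_ne_zero ih h1 this.symm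





lemma summable_aux {r : ℝ} (hr0 : 0 < r) (hr1 : r < 1) {ρ : ℝ} (hρ0 : 0 ≤ ρ) (hρ1 : ρ < 1) :
    Summable (fun k : ℕ => ((k : ℝ) + 1) * |genBinom r k| * ρ ^ k) := by
  apply summable_of_ratio_norm_eventually_le hρ1
  filter_upwards [Filter.eventually_ge_atTop 1] with k hk
  have hk1 : (1 : ℝ) ≤ k := by exact_mod_cast hk
  have habs : |genBinom r (k + 1)| * ((k : ℝ) + 1) = |genBinom r k| * ((k : ℝ) - r) := by
    have := congrArg abs (genBinom_succ r k)
    rw [abs_mul, abs_mul] at this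
    rw [abs_of_pos (by linarith : (0:ℝ) < (k:ℝ)+1)] at this
    rw [abs_of_neg (by linarith : r - (k:ℝ) < 0)] at this
    linarith [this]
  have key : ((k : ℝ) + 2) * ((k : ℝ) - r) ≤ ((k : ℝ) + 1) ^ 2 := by nlinarith
  have hc : ((k : ℝ) + 2) * |genBinom r (k+1)| ≤ ((k : ℝ) + 1) * |genBinom r k| := by
    rw [← mul_le_mul_iff_of_pos_right (show (0:ℝ) < (k:ℝ)+1 by linarith)]
    calc ((k : ℝ) + 2) * |genBinom r (k+1)| * ((k:ℝ)+1)
        = ((k : ℝ) + 2) * (|genBinom r (k+1)| * ((k:ℝ)+1)) := by ring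
      _ = ((k : ℝ) + 2) * (|genBinom r k| * ((k:ℝ) - r)) := by rw [habs]
      _ ≤ ((k : ℝ) + 1) ^ 2 * |genBinom r k| := by
          nlinarith [abs_nonneg (genBinom r k)]
      _ = ((k : ℝ) + 1) * |genBinom r k| * ((k:ℝ)+1) := by ring
  have h1 : (0:ℝ) ≤ ((k : ℝ) + 1) * |genBinom r k| * ρ ^ k := by positivity
  have h2 : (0:ℝ) ≤ ((k : ℝ) + 1 + 1) * |genBinom r (k+1)| * ρ ^ (k+1) := by positivity
  rw [Real.norm_eq_abs, Real.norm_eq_abs]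
  push_cast
  rw [abs_of_nonneg h2, abs_of_nonneg h1]
  calc ((k : ℝ) + 1 + 1) * |genBinom r (k+1)| * ρ ^ (k+1)
      = (((k : ℝ) + 2) * |genBinom r (k+1)|) * ρ ^ (k+1) := by ring
    _ ≤ (((k : ℝ) + 1) * |genBinom r k|) * ρ ^ (k+1) := by
        apply mul_le_mul_of_nonneg_right hc (by positivity)
    _ = ρ * (((k : ℝ) + 1) * |genBinom r k| * ρ ^ k) := by ring






lemma binom_hasSum {r : ℝ} (hr0 : 0 < r) (hr1 : r < 1) {x : ℝ} (hx : |x| < 1) :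
    HasSum (fun k : ℕ => genBinom r k * x ^ k) ((1 + x) ^ r) := by
  set c := genBinom r with hcdef
  -- summability of the series and related ones at |y| < 1
  have hsum : ∀ y : ℝ, |y| < 1 → Summable (fun k : ℕ => c k * y ^ k) := by
    intro y hy
    apply Summable.of_norm_bounded (summable_aux hr0 hr1 (abs_nonneg y) hy)
    intro k
    rw [Real.norm_eq_abs, abs_mul, abs_pow]
    nlinarith [mul_nonneg (abs_nonneg (c k)) (pow_nonneg (abs_nonneg y) k),
      Nat.cast_nonneg (α := ℝ) k]
  set f : ℝ → ℝ := fun z => ∑' k : ℕ, c k * z ^ k with hfdef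
  set d : ℝ → ℝ := fun z => ∑' k : ℕ, c k * ((k : ℝ) * z ^ (k - 1)) with hddef
  -- derivative bound setup
  have hderiv : ∀ y : ℝ, |y| < 1 → HasDerivAt f (d y) y := by
    intro y hy
    set ρ := (|y| + 1) / 2 with hρ
    have hρ0 : 0 < ρ := by positivity
    have hρ1 : ρ < 1 := by rw [hρ]; linarith
    have hyρ : |y| < ρ := by rw [hρ]; linarith
    have hu : Summable (fun k : ℕ => ρ⁻¹ * (((k : ℝ) + 1) * |c k| * ρ ^ k)) :=
      (summable_aux hr0 hr1 hρ0.le hρ1).mul_left _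
    have hbound : ∀ (k : ℕ) (z : ℝ), z ∈ Set.Ioo (-ρ) ρ →
        ‖c k * ((k : ℝ) * z ^ (k - 1))‖ ≤ ρ⁻¹ * (((k : ℝ) + 1) * |c k| * ρ ^ k) := by
      intro k z hz
      have hzρ : |z| ≤ ρ := le_of_lt (abs_lt.2 ⟨hz.1, hz.2⟩)
      match k with
      | 0 => simp; positivity
      | (m + 1) =>
        have hrw : ρ⁻¹ * (((m : ℝ) + 1 + 1) * |c (m + 1)| * ρ ^ (m + 1))
            = ((m : ℝ) + 2) * |c (m + 1)| * ρ ^ m := by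
          rw [pow_succ]; field_simp; ring
        push_cast
        rw [hrw, Real.norm_eq_abs, abs_mul, abs_mul, abs_pow,
          abs_of_nonneg (by positivity : (0:ℝ) ≤ (m:ℝ) + 1)]
        have h1 : |z| ^ m ≤ ρ ^ m := pow_le_pow_left₀ (abs_nonneg z) hzρ m
        try simp only [Nat.add_sub_cancel]
        calc |c (m + 1)| * (((m : ℝ) + 1) * |z| ^ m)
            ≤ |c (m + 1)| * (((m : ℝ) + 2) * ρ ^ m) := by
              apply mul_le_mul_of_nonneg_left _ (abs_nonneg _)
              exact mul_le_mul (by linarith) h1 (by positivity) (by positivity)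
          _ = ((m : ℝ) + 2) * |c (m + 1)| * ρ ^ m := by ring
    have h0mem : (0 : ℝ) ∈ Set.Ioo (-ρ) ρ := ⟨by linarith, hρ0⟩
    have hymem : y ∈ Set.Ioo (-ρ) ρ := ⟨(abs_lt.1 hyρ).1, (abs_lt.1 hyρ).2⟩
    have hsum0 : Summable (fun k : ℕ => c k * (0 : ℝ) ^ k) := by
      apply summable_of_ne_finset_zero (s := {0})
      intro k hk
      simp only [Finset.mem_singleton] at hk
      rw [zero_pow hk, mul_zero]
    exact hasDerivAt_tsum_of_isPreconnected hu isOpen_Ioo (convex_Ioo _ _).isPreconnected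
      (fun k z _ => (hasDerivAt_pow k z).const_mul (c k)) hbound h0mem hsum0 hymem
  -- the ODE : (1+y) * d y = r * f y
  have hode : ∀ y : ℝ, |y| < 1 → (1 + y) * d y = r * f y := by
    intro y hy
    set ρ := (|y| + 1) / 2 with hρ
    have hρ0 : 0 < ρ := by positivity
    have hρ1 : ρ < 1 := by rw [hρ]; linarith
    have hyρ : |y| < ρ := by rw [hρ]; linarith
    -- summability of the derivative series
    have hA : Summable (fun k : ℕ => c k * ((k : ℝ) * y ^ (k - 1))) := by
      apply Summable.of_norm_bounded ((summable_aux hr0 hr1 hρ0.le hρ1).mul_left ρ⁻¹)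
      intro k
      -- reuse bound
      have hzρ : |y| ≤ ρ := hyρ.le
      match k with
      | 0 => simp; positivity
      | (m + 1) =>
        have hrw : ρ⁻¹ * (((m : ℝ) + 1 + 1) * |c (m + 1)| * ρ ^ (m + 1))
            = ((m : ℝ) + 2) * |c (m + 1)| * ρ ^ m := by
          rw [pow_succ]; field_simp; ring
        push_cast
        rw [hrw, Real.norm_eq_abs, abs_mul, abs_mul, abs_pow,
          abs_of_nonneg (by positivity : (0:ℝ) ≤ (m:ℝ) + 1)]
        have h1 : |y| ^ m ≤ ρ ^ m := pow_le_pow_left₀ (abs_nonneg y) hzρ m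
        try simp only [Nat.add_sub_cancel]
        calc |c (m + 1)| * (((m : ℝ) + 1) * |y| ^ m)
            ≤ |c (m + 1)| * (((m : ℝ) + 2) * ρ ^ m) := by
              apply mul_le_mul_of_nonneg_left _ (abs_nonneg _)
              exact mul_le_mul (by linarith) h1 (by positivity) (by positivity)
          _ = ((m : ℝ) + 2) * |c (m + 1)| * ρ ^ m := by ring
    have hB : Summable (fun k : ℕ => (k : ℝ) * c k * y ^ k) := by
      apply Summable.of_norm_bounded (summable_aux hr0 hr1 (abs_nonneg y) hy)
      intro k
      rw [Real.norm_eq_abs, abs_mul, abs_mul, abs_pow, Nat.abs_cast]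
      nlinarith [mul_nonneg (abs_nonneg (c k)) (pow_nonneg (abs_nonneg y) k),
        Nat.cast_nonneg (α := ℝ) k]
    have hAsucc : Summable (fun k : ℕ => c (k + 1) * (((k : ℝ) + 1) * y ^ k)) := by
      have := (summable_nat_add_iff 1).2 hA
      apply this.congr
      intro k
      simp only [Nat.add_sub_cancel]
      push_cast
      ring
    -- shift : d y = ∑' k, (r - k) * c k * y ^ k
    have hshift : d y = ∑' k : ℕ, (r - (k : ℝ)) * c k * y ^ k := by
      rw [hddef]
      simp only
      rw [Summable.tsum_eq_zero_add hA]
      simp only [Nat.cast_zero, Nat.zero_sub, pow_zero, mul_zero, zero_mul, zero_add]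
      apply tsum_congr
      intro k
      have h1 : c (k + 1) * ((k : ℝ) + 1) = c k * (r - k) := genBinom_succ r k
      have : ((k : ℕ) + 1 : ℕ) - 1 = k := rfl
      push_cast
      try simp only [Nat.add_sub_cancel]
      linear_combination y ^ k * h1
    have hC : Summable (fun k : ℕ => (r - (k : ℝ)) * c k * y ^ k) := by
      apply hAsucc.congr
      intro k
      have h1 : c (k + 1) * ((k : ℝ) + 1) = c k * (r - k) := genBinom_succ r k
      linear_combination y ^ k * h1
    have hyd : y * d y = ∑' k : ℕ, (k : ℝ) * c k * y ^ k := by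
      rw [hddef]
      simp only
      rw [← tsum_mul_left]
      apply tsum_congr
      intro k
      match k with
      | 0 => simp
      | (m + 1) =>
        simp only [Nat.add_sub_cancel]
        push_cast
        ring
    have := Summable.tsum_add hC hB
    calc (1 + y) * d y = d y + y * d y := by ring
      _ = (∑' k : ℕ, (r - (k : ℝ)) * c k * y ^ k) + ∑' k : ℕ, (k : ℝ) * c k * y ^ k := by
          rw [hyd, hshift]
      _ = ∑' k : ℕ, ((r - (k : ℝ)) * c k * y ^ k + (k : ℝ) * c k * y ^ k) := (Summable.tsum_add hC hB).symm
      _ = ∑' k : ℕ, r * (c k * y ^ k) := by apply tsum_congr; intro k; ring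
      _ = r * f y := by rw [tsum_mul_left]
  -- constancy of H y = f y * (1+y)^(-r)
  set H : ℝ → ℝ := fun y => f y * (1 + y) ^ (-r) with hHdef
  have hHderiv : ∀ y ∈ Set.Ioo (-1 : ℝ) 1, HasDerivAt H 0 y := by
    intro y hy
    have hy' : |y| < 1 := abs_lt.2 ⟨hy.1, hy.2⟩
    have h1y : (0 : ℝ) < 1 + y := by have := hy.1; linarith
    have hrp : HasDerivAt (fun z : ℝ => (1 + z) ^ (-r)) (-r * (1 + y) ^ (-r - 1)) y := by
      have h2 : HasDerivAt (fun z : ℝ => 1 + z) 1 y := (hasDerivAt_id y).const_add 1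
      have h3 := (Real.hasDerivAt_rpow_const (x := 1 + y) (p := -r) (Or.inl h1y.ne')).comp y h2
      simpa [Function.comp_def] using h3
    have := (hderiv y hy').mul hrp
    refine HasDerivAt.congr_deriv this ?_
    have hode' := hode y hy'
    have hsplit : (1 + y) ^ (-r) = (1 + y) ^ (-r - 1) * (1 + y) := by
      nth_rewrite 1 [show -r = (-r - 1) + 1 by ring]
      rw [Real.rpow_add h1y, Real.rpow_one]
    rw [hsplit]
    linear_combination ((1 + y) ^ (-r - 1)) * hode'
  -- conclude H is constant
  have hxI : x ∈ Set.Ioo (-1 : ℝ) 1 := ⟨(abs_lt.1 hx).1, (abs_lt.1 hx).2⟩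
  have h0I : (0 : ℝ) ∈ Set.Ioo (-1 : ℝ) 1 := by constructor <;> norm_num
  have hconst : H x = H 0 := by
    apply (convex_Ioo (-1 : ℝ) 1).is_const_of_fderivWithin_eq_zero
      (fun y hy => (hHderiv y hy).differentiableAt.differentiableWithinAt) _ hxI h0I
    intro y hy
    rw [fderivWithin_of_isOpen isOpen_Ioo hy]
    have h := (hHderiv y hy).hasFDerivAt.fderiv
    rw [h]
    apply ContinuousLinearMap.ext
    intro w
    simp
  have hf0 : f 0 = 1 := by
    rw [hfdef]
    simp only
    rw [tsum_eq_single 0]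
    · simpa using genBinom_zero r
    · intro k hk
      rw [zero_pow hk, mul_zero]
  have h1x : (0 : ℝ) < 1 + x := by have := hxI.1; linarith
  have hH0 : H 0 = 1 := by
    rw [hHdef]; simp [hf0]
  have hfx : f x = (1 + x) ^ r := by
    have h2 : f x * (1 + x) ^ (-r) = 1 := hconst.trans hH0
    have h3 : (1 + x) ^ (-r) = ((1 + x) ^ r)⁻¹ := Real.rpow_neg h1x.le r
    rw [h3] at h2
    have h4 : (1 + x) ^ r ≠ 0 := (Real.rpow_pos_of_pos h1x r).ne'
    field_simp at h2
    exact h2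
  have := (hsum x hx).hasSum
  rwa [show (∑' k : ℕ, c k * x ^ k) = (1 + x) ^ r from hfx] at this



theorem stmt_8 (n : ℕ) (hn : 1 ≤ n) (a v : ℝ) (hv : 0 < v) (h : |v ^ n - a| < v ^ n) :
    a ^ ((1 : ℝ) / n) =
      ∑' k : ℕ, (-1) ^ k * genBinom (1 / n) k * v ^ ((1 : ℤ) - n * k) * (v ^ n - a) ^ k := by
  have hvn : (0 : ℝ) < v ^ n := pow_pos hv n
  have habs := abs_lt.1 h
  have ha : 0 < a := by linarith [habs.1]
  rcases eq_or_lt_of_le hn with h1 | h2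
  · -- n = 1
    subst h1
    have hg : ∀ k, k ∉ Finset.range 2 →
        (-1 : ℝ) ^ k * genBinom (1 / (1 : ℕ)) k * v ^ ((1 : ℤ) - (1 : ℕ) * k) * (v ^ (1:ℕ) - a) ^ k
          = 0 := by
      intro k hk
      simp only [Finset.mem_range, not_lt] at hk
      have : genBinom (1 / ((1 : ℕ) : ℝ)) k = 0 := by
        rw [genBinom]
        rw [Finset.prod_eq_zero (Finset.mem_range.2 (by omega : 1 < k))]
        · exact zero_div _
        · norm_num
      rw [this]
      ring
    rw [tsum_eq_sum (s := Finset.range 2) hg]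
    rw [Finset.sum_range_succ, Finset.sum_range_one]
    have g0 : genBinom (1 / ((1 : ℕ) : ℝ)) 0 = 1 := by simp [genBinom]
    have g1 : genBinom (1 / ((1 : ℕ) : ℝ)) 1 = 1 := by simp [genBinom]
    rw [g0, g1]
    norm_num
  · -- n ≥ 2
    set r : ℝ := 1 / (n : ℝ) with hr
    have hn0 : (0 : ℝ) < n := by positivity
    have hn2 : (2 : ℝ) ≤ n := by exact_mod_cast h2
    have hr0 : 0 < r := by positivity
    have hr1 : r < 1 := by rw [hr]; rw [div_lt_one hn0]; linarith
    set x : ℝ := (a - v ^ n) / v ^ n with hx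
    have hx1 : |x| < 1 := by
      rw [hx, abs_div, abs_of_pos hvn, div_lt_one hvn, abs_sub_comm]
      exact h
    have h1x : 1 + x = a / v ^ n := by rw [hx]; field_simp; ring
    have hS := (binom_hasSum hr0 hr1 hx1).mul_left v
    have hval : v * (1 + x) ^ r = a ^ ((1 : ℝ) / n) := by
      rw [h1x, Real.div_rpow ha.le hvn.le]
      have hvr : (v ^ n : ℝ) ^ r = v := by
        rw [← Real.rpow_natCast v n, ← Real.rpow_mul hv.le]
        rw [hr, mul_one_div, div_self (by positivity : (n:ℝ) ≠ 0), Real.rpow_one]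
      rw [hvr, hr]
      field_simp
    rw [← hval]
    symm
    apply HasSum.tsum_eq
    have hterm : ∀ k : ℕ, v * (genBinom r k * x ^ k)
        = (-1) ^ k * genBinom (1 / (n : ℝ)) k * v ^ ((1 : ℤ) - (n : ℤ) * k) * (v ^ n - a) ^ k := by
      intro k
      have hz : v ^ ((1 : ℤ) - (n : ℤ) * k) = v / (v ^ n) ^ k := by
        rw [zpow_sub₀ hv.ne', zpow_one]
        congr 1
        rw [show ((n : ℤ) * k) = ((n * k : ℕ) : ℤ) by push_cast; ring, zpow_natCast, pow_mul]
      rw [hz, hx]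
      rw [div_pow]
      have : (a - v ^ n) ^ k = (-1) ^ k * (v ^ n - a) ^ k := by
        rw [← neg_pow, neg_sub]
      rw [this]
      field_simp
      ring
    exact hS.congr_fun fun k => (hterm k).symm
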